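/- Let A, Â, P be L×L real matrices with nonnegative entries such that P is column-stochastic, A = ÂP, Â satisfies Â_ii > Â_ij for all j ≠ i, and trace(A) = trace(Â). Then P is the identity matrix. -/
import Mathlib


theorem stmt_2 {L : ℕ} (A Ahat P : Matrix (Fin L) (Fin L) ℝ)
    (hA : ∀ i j, 0 ≤ A i j) (hAhat : ∀ i j, 0 ≤ Ahat i j)
    (hPnn : ∀ i j, 0 ≤ P i j) (hPs : ∀ i, ∑ j, P j i = 1)
    (hEq : A = Ahat * P)
    (hDD : ∀ i j, j ≠ i → Ahat i j < Ahat i i)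
    (hTr : Matrix.trace A = Matrix.trace Ahat) :
    P = 1 := by
  -- trace A = ∑ i, ∑ k, Ahat i k * P k i ≤ ∑ i, Ahat i i
  have hle : ∀ i k, Ahat i k * P k i ≤ Ahat i i * P k i := by
    intro i k
    by_cases h : k = i
    · subst h; exact le_rfl
    · exact mul_le_mul_of_nonneg_right (le_of_lt (hDD i k h)) (hPnn k i)
  have htr : ∑ i, ∑ k, Ahat i k * P k i = ∑ i, Ahat i i := by
    have := hTr
    simp only [Matrix.trace, Matrix.diag, hEq, Matrix.mul_apply] at this
    exact this
  have hle2 : ∀ i, (∑ k, Ahat i k * P k i) ≤ Ahat i i := by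
    intro i
    calc ∑ k, Ahat i k * P k i ≤ ∑ k, Ahat i i * P k i :=
          Finset.sum_le_sum (fun k _ => hle i k)
      _ = Ahat i i * ∑ k, P k i := by rw [Finset.mul_sum]
      _ = Ahat i i := by rw [hPs i, mul_one]
  have heqi : ∀ i, (∑ k, Ahat i k * P k i) = Ahat i i := by
    intro i
    by_contra hne
    have hlt : (∑ k, Ahat i k * P k i) < Ahat i i := lt_of_le_of_ne (hle2 i) hne
    have : ∑ j, ∑ k, Ahat j k * P k j < ∑ j, Ahat j j := by
      apply Finset.sum_lt_sum (fun j _ => hle2 j) ⟨i, Finset.mem_univ i, hlt⟩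
    exact absurd htr (ne_of_lt this)
  have hterm : ∀ i k, Ahat i k * P k i = Ahat i i * P k i := by
    intro i k
    have h1 : (∑ k, Ahat i k * P k i) = ∑ k, Ahat i i * P k i := by
      rw [heqi i, ← Finset.mul_sum, hPs i, mul_one]
    have := (Finset.sum_eq_sum_iff_of_le (fun k _ => hle i k)).mp h1
    exact this k (Finset.mem_univ k)
  have hoff : ∀ i k, k ≠ i → P k i = 0 := by
    intro i k hki
    have := hterm i k
    have hlt := hDD i k hki
    by_contra hP0
    have hPpos : 0 < P k i := lt_of_le_of_ne (hPnn k i) (Ne.symm hP0)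
    have : Ahat i k * P k i < Ahat i i * P k i := mul_lt_mul_of_pos_right hlt hPpos
    exact absurd (hterm i k) (ne_of_lt this)
  ext i j
  by_cases h : i = j
  · subst h
    have := hPs i
    rw [Finset.sum_eq_single i (fun k _ hk => hoff i k hk) (by simp)] at this
    simp [this]
  · simp [Matrix.one_apply, h, hoff j i h]
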